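/- (Interpolation) Let n ≥ 1 be an integer, s_n := [n/2] + 1, and s ≥ s_n. Then there exists an increasing function s ↦ C(s) such that for all u, v ∈ H^s(𝕋^n): ‖uv‖_s ≤ C(s) ‖u‖_s ‖v‖_{s_n} + C(s_n) ‖u‖_{s_n} ‖v‖_s. In particular H^s(𝕋^n) is an algebra for s ≥ s_n. -/

import Mathlib

/-- Euclidean norm of a lattice point `j ∈ ℤ^n`. -/
noncomputable def euclNormZ {n : ℕ} (j : Fin n → ℤ) : ℝ :=
  Real.sqrt (∑ i, ((j i : ℝ)) ^ 2)

/-- The weight `⟨j⟩ := max{1,|j|}`. -/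
noncomputable def wt1 {n : ℕ} (j : Fin n → ℤ) : ℝ := max 1 (euclNormZ j)

/-- Square of the Sobolev `H^s(𝕋^n)` norm of a function given through its Fourier
coefficients `u : ℤ^n → ℂ`: `‖u‖_s² = Σ_j ⟨j⟩^{2s} |û_j|²`. -/
noncomputable def sobSq {n : ℕ} (s : ℝ) (u : (Fin n → ℤ) → ℂ) : ℝ :=
  ∑' j : Fin n → ℤ, (wt1 j) ^ (2 * s) * ‖u j‖ ^ 2

/-- The Sobolev `H^s(𝕋^n)` norm (on the Fourier side). -/
noncomputable def sobN {n : ℕ} (s : ℝ) (u : (Fin n → ℤ) → ℂ) : ℝ :=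
  Real.sqrt (sobSq s u)

/-- Membership in `H^s(𝕋^n)` (on the Fourier side): the weighted series converges. -/
def MemSob {n : ℕ} (s : ℝ) (u : (Fin n → ℤ) → ℂ) : Prop :=
  Summable fun j : Fin n → ℤ => (wt1 j) ^ (2 * s) * ‖u j‖ ^ 2

/-- Fourier coefficients of the pointwise product `u·v`: the convolution of `u` and `v`. -/
noncomputable def convC {n : ℕ} (u v : (Fin n → ℤ) → ℂ) : (Fin n → ℤ) → ℂ :=
  fun j => ∑' k : Fin n → ℤ, u k * v (j - k)


open scoped ENNReal NNReal
open MeasureTheory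

open scoped ENNReal NNReal
open MeasureTheory

section CS
variable {α : Type*} [Countable α]

lemma tsum_CS (f g : α → ℝ≥0∞) :
    ∑' a, f a * g a ≤ (∑' a, f a ^ (2:ℝ)) ^ (2⁻¹:ℝ) * (∑' a, g a ^ (2:ℝ)) ^ (2⁻¹:ℝ) := by
  letI : MeasurableSpace α := ⊤
  haveI : MeasurableSingletonClass α := ⟨fun _ => trivial⟩
  have hconj : (2:ℝ).HolderConjugate 2 := Real.holderConjugate_iff.mpr ⟨one_lt_two, by norm_num⟩
  have h := ENNReal.lintegral_mul_le_Lp_mul_Lq (Measure.count : Measure α) hconj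
    (measurable_from_top (f := f)).aemeasurable (measurable_from_top (f := g)).aemeasurable
  simpa [MeasureTheory.lintegral_count, one_div] using h

lemma tsum_Minkowski (f g : α → ℝ≥0∞) :
    (∑' a, (f a + g a) ^ (2:ℝ)) ^ (2⁻¹:ℝ) ≤
      (∑' a, f a ^ (2:ℝ)) ^ (2⁻¹:ℝ) + (∑' a, g a ^ (2:ℝ)) ^ (2⁻¹:ℝ) := by
  letI : MeasurableSpace α := ⊤
  haveI : MeasurableSingletonClass α := ⟨fun _ => trivial⟩
  have h := ENNReal.lintegral_Lp_add_le (μ := (Measure.count : Measure α))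
    (measurable_from_top (f := f)).aemeasurable (measurable_from_top (f := g)).aemeasurable
    one_le_two
  simpa [MeasureTheory.lintegral_count, one_div] using h

end CS

section Young
variable {α : Type*} [AddCommGroup α] [Countable α]
set_option linter.unusedSectionVars false

lemma tsum_translate (b : α → ℝ≥0∞) (k : α) : ∑' j, b (j - k) = ∑' j, b j :=
  (Equiv.subRight k).tsum_eq b

lemma tsum_reflect (b : α → ℝ≥0∞) (j : α) : ∑' k, b (j - k) = ∑' k, b k :=
  (Equiv.subLeft j).tsum_eq b

/-- convolution of two `ℝ≥0∞`-valued sequences -/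
noncomputable def conv2 (f g : α → ℝ≥0∞) : α → ℝ≥0∞ := fun j => ∑' k, f k * g (j - k)

lemma sq_tsum_le (f g : α → ℝ≥0∞) (j : α) :
    (conv2 f g j) ^ (2:ℝ) ≤ (∑' k, f k ^ (2:ℝ) * g (j - k)) * ∑' k, g k := by
  have key : conv2 f g j ≤
      (∑' k, f k ^ (2:ℝ) * g (j - k)) ^ (2⁻¹:ℝ) * (∑' k, g k) ^ (2⁻¹:ℝ) := by
    have h := tsum_CS (fun k => f k * g (j - k) ^ (2⁻¹:ℝ)) (fun k => g (j - k) ^ (2⁻¹:ℝ))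
    have e1 : ∀ k : α, (f k * g (j - k) ^ (2⁻¹:ℝ)) * g (j - k) ^ (2⁻¹:ℝ) = f k * g (j - k) := by
      intro k
      rw [mul_assoc, ← ENNReal.rpow_add_of_nonneg _ _ (by norm_num) (by norm_num)]
      norm_num
    have e2 : ∀ k : α, (f k * g (j - k) ^ (2⁻¹:ℝ)) ^ (2:ℝ) = f k ^ (2:ℝ) * g (j - k) := by
      intro k
      rw [ENNReal.mul_rpow_of_nonneg _ _ (by norm_num), ← ENNReal.rpow_mul]
      norm_num
    have e3 : ∀ k : α, (g (j - k) ^ (2⁻¹:ℝ)) ^ (2:ℝ) = g (j - k) := by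
      intro k; rw [← ENNReal.rpow_mul]; norm_num
    simp only [e1, e2, e3] at h
    rw [tsum_reflect (fun k => g k) j] at h
    calc conv2 f g j = ∑' k, f k * g (j - k) := rfl
    _ ≤ _ := by
      refine le_trans (le_of_eq ?_) h
      rfl
  calc (conv2 f g j) ^ (2:ℝ)
      ≤ ((∑' k, f k ^ (2:ℝ) * g (j - k)) ^ (2⁻¹:ℝ) * (∑' k, g k) ^ (2⁻¹:ℝ)) ^ (2:ℝ) := by
        exact ENNReal.rpow_le_rpow key (by norm_num)
    _ = (∑' k, f k ^ (2:ℝ) * g (j - k)) * ∑' k, g k := by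
        rw [ENNReal.mul_rpow_of_nonneg _ _ (by norm_num), ← ENNReal.rpow_mul,
          ← ENNReal.rpow_mul]
        norm_num

omit [Countable α] in
lemma young_l2_l1_dummy : True := trivial
lemma young_l2_l1 (f g : α → ℝ≥0∞) :
    (∑' j, (conv2 f g j) ^ (2:ℝ)) ^ (2⁻¹:ℝ) ≤
      (∑' j, f j ^ (2:ℝ)) ^ (2⁻¹:ℝ) * ∑' j, g j := by
  have h1 : ∑' j, (conv2 f g j) ^ (2:ℝ) ≤ (∑' j, f j ^ (2:ℝ)) * (∑' j, g j) ^ (2:ℝ) := by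
    calc ∑' j, (conv2 f g j) ^ (2:ℝ)
        ≤ ∑' j, (∑' k, f k ^ (2:ℝ) * g (j - k)) * ∑' k, g k :=
          ENNReal.tsum_le_tsum fun j => sq_tsum_le f g j
      _ = (∑' (j) (k), f k ^ (2:ℝ) * g (j - k)) * ∑' k, g k := by
          rw [ENNReal.tsum_mul_right]
      _ = (∑' (k) (j), f k ^ (2:ℝ) * g (j - k)) * ∑' k, g k := by rw [ENNReal.tsum_comm]
      _ = ((∑' k, f k ^ (2:ℝ) * ∑' j, g (j - k))) * ∑' k, g k := by
          congr 1; exact tsum_congr fun k => ENNReal.tsum_mul_left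
      _ = (∑' j, f j ^ (2:ℝ)) * (∑' j, g j) ^ (2:ℝ) := by
          simp_rw [tsum_translate g]
          rw [ENNReal.tsum_mul_right, ENNReal.rpow_two, sq]; ring
  calc (∑' j, (conv2 f g j) ^ (2:ℝ)) ^ (2⁻¹:ℝ)
      ≤ ((∑' j, f j ^ (2:ℝ)) * (∑' j, g j) ^ (2:ℝ)) ^ (2⁻¹:ℝ) :=
        ENNReal.rpow_le_rpow h1 (by norm_num)
    _ = (∑' j, f j ^ (2:ℝ)) ^ (2⁻¹:ℝ) * ∑' j, g j := by
        rw [ENNReal.mul_rpow_of_nonneg _ _ (by norm_num), ← ENNReal.rpow_mul]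
        norm_num

lemma tsum_sq_smul (K : ℝ≥0∞) (f : α → ℝ≥0∞) :
    (∑' j, (K * f j) ^ (2:ℝ)) ^ (2⁻¹:ℝ) = K * (∑' j, f j ^ (2:ℝ)) ^ (2⁻¹:ℝ) := by
  have e : ∀ j, (K * f j) ^ (2:ℝ) = K ^ (2:ℝ) * f j ^ (2:ℝ) := fun j =>
    ENNReal.mul_rpow_of_nonneg _ _ (by norm_num)
  rw [tsum_congr e, ENNReal.tsum_mul_left,
    ENNReal.mul_rpow_of_nonneg _ _ (by norm_num : (0:ℝ) ≤ 2⁻¹), ← ENNReal.rpow_mul]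
  norm_num

end Young


lemma exp_aux {x : ℝ} (hx0 : 0 < x) (hx1 : x ≤ 1) :
    (2:ℝ) ^ (-x) ≤ 1 - x/3 := by
  have hl2 : (0.6931471803:ℝ) < Real.log 2 := Real.log_two_gt_d9
  have h1 : (2:ℝ) ^ (-x) = Real.exp (-(x * Real.log 2)) := by
    rw [Real.rpow_def_of_pos (by norm_num)]
    ring_nf
  have h2 : Real.exp (-(x * Real.log 2)) ≤ 1/(1 + x * Real.log 2) := by
    have h3 : 1 + x * Real.log 2 ≤ Real.exp (x * Real.log 2) := by
      have := Real.add_one_le_exp (x * Real.log 2); linarith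
    have hpos : 0 < 1 + x * Real.log 2 := by nlinarith
    rw [Real.exp_neg, one_div]
    exact inv_anti₀ hpos h3
  have h4 : 1/(1 + x * Real.log 2) ≤ 1 - x/3 := by
    rw [div_le_iff₀ (by nlinarith)]
    have hx2 : x*x*Real.log 2 ≤ x*Real.log 2 :=
      mul_le_mul_of_nonneg_right (mul_le_of_le_one_right hx0.le hx1) (by linarith)
    have hx3 : x*(0.6931471803:ℝ) ≤ x*Real.log 2 := by nlinarith
    nlinarith
  linarith [h1 ▸ h2.trans h4]

lemma scalar_split {σ s t a b : ℝ} (hσ : 1 ≤ σ) (hs : σ ≤ s) (ht : 0 ≤ t) (ha : 0 ≤ a)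
    (hb : 0 ≤ b) (htab : t ≤ a + b) :
    t ^ s ≤ (3*s) ^ s * a ^ s + 2 ^ σ * b ^ s := by
  have hs1 : 1 ≤ s := hσ.trans hs
  have hs0 : 0 < s := by linarith
  set θ : ℝ := 2 ^ (σ/s) with hθ
  have hθpos : 0 < θ := Real.rpow_pos_of_pos (by norm_num) _
  have hθinv : θ⁻¹ ≤ 1 - 1/(3*s) := by
    have e1 : θ⁻¹ = (2:ℝ) ^ (-(σ/s)) := by rw [hθ, ← Real.rpow_neg (by norm_num)]
    have e2 : (2:ℝ) ^ (-(σ/s)) ≤ (2:ℝ) ^ (-(1/s)) := by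
      apply Real.rpow_le_rpow_of_exponent_le one_le_two
      have : 1/s ≤ σ/s := by gcongr
      linarith
    have e3 : (2:ℝ) ^ (-(1/s)) ≤ 1 - (1/s)/3 :=
      exp_aux (by positivity) (by rw [div_le_one hs0]; exact hs1)
    have : (1/s)/3 = 1/(3*s) := by ring
    rw [e1]
    linarith [e2.trans e3]
  rcases le_or_gt t (θ * b) with hc | hc
  · have h1 : t ^ s ≤ (θ * b) ^ s := Real.rpow_le_rpow ht hc hs0.le
    have h2 : (θ * b) ^ s = 2 ^ σ * b ^ s := by
      rw [Real.mul_rpow hθpos.le hb, hθ]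
      congr 1
      rw [← Real.rpow_mul (by norm_num), div_mul_cancel₀ _ hs0.ne']
    have : 0 ≤ (3*s) ^ s * a ^ s := by positivity
    calc t ^ s ≤ 2 ^ σ * b ^ s := h2 ▸ h1
      _ ≤ _ := by linarith
  · -- a is big: t ≤ 3s * a
    have hb' : b < t * θ⁻¹ := by
      rw [lt_mul_inv_iff₀ hθpos, mul_comm]; exact hc
    have ha' : t * (1/(3*s)) ≤ a := by
      have h5 : t * (1/(3*s)) ≤ t * (1 - θ⁻¹) := by
        apply mul_le_mul_of_nonneg_left _ ht
        linarith
      nlinarith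
    have h6 : t ≤ 3*s*a := by
      have h7 : t * (1/(3*s)) * (3*s) ≤ a * (3*s) := by
        apply mul_le_mul_of_nonneg_right ha' (by linarith)
      have : t * (1/(3*s)) * (3*s) = t := by field_simp
      linarith [this ▸ h7]
    have h8 : t ^ s ≤ (3*s*a) ^ s := Real.rpow_le_rpow ht h6 hs0.le
    have h9 : (3*s*a) ^ s = (3*s) ^ s * a ^ s := Real.mul_rpow (by linarith) ha
    have : 0 ≤ (2:ℝ) ^ σ * b ^ s := by positivity
    calc t ^ s ≤ (3*s) ^ s * a ^ s := h9 ▸ h8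
      _ ≤ _ := by linarith

namespace SobAux
variable {n : ℕ}

lemma one_le_wt1 (j : Fin n → ℤ) : 1 ≤ wt1 j := le_max_left _ _
lemma wt1_pos (j : Fin n → ℤ) : 0 < wt1 j := lt_of_lt_of_le one_pos (one_le_wt1 j)

noncomputable def toE (j : Fin n → ℤ) : EuclideanSpace ℝ (Fin n) :=
  (WithLp.equiv 2 (Fin n → ℝ)).symm (fun i => (j i : ℝ))

lemma euclNormZ_eq (j : Fin n → ℤ) : euclNormZ j = ‖toE j‖ := by
  rw [EuclideanSpace.norm_eq, euclNormZ]
  congr 1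
  refine Finset.sum_congr rfl fun i _ => ?_
  rw [toE, WithLp.equiv_symm_apply, PiLp.toLp_apply, Real.norm_eq_abs, sq_abs]

lemma euclNormZ_triangle (j k : Fin n → ℤ) :
    euclNormZ j ≤ euclNormZ k + euclNormZ (j - k) := by
  rw [euclNormZ_eq, euclNormZ_eq, euclNormZ_eq]
  have : toE j = toE k + toE (j - k) := by
    ext i
    simp only [toE, WithLp.equiv_symm_apply, PiLp.toLp_apply, PiLp.add_apply, Pi.sub_apply]
    push_cast
    ring
  rw [this]
  exact norm_add_le _ _

lemma wt1_triangle (j k : Fin n → ℤ) : wt1 j ≤ wt1 k + wt1 (j - k) := by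
  have h := euclNormZ_triangle j k
  have h1 : (0:ℝ) ≤ euclNormZ k := Real.sqrt_nonneg _
  have h2 : (0:ℝ) ≤ euclNormZ (j - k) := Real.sqrt_nonneg _
  have h3 := le_max_left 1 (euclNormZ k)
  have h4 := le_max_left 1 (euclNormZ (j-k))
  have h5 := le_max_right 1 (euclNormZ k)
  have h6 := le_max_right 1 (euclNormZ (j-k))
  simp only [wt1] at *
  rcases max_cases 1 (euclNormZ j) with ⟨he, _⟩ | ⟨he, _⟩ <;> rw [he] <;> nlinarith

lemma wt1_coord (j : Fin n → ℤ) (i : Fin n) : max 1 |(j i : ℝ)| ≤ wt1 j := by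
  have h : |(j i : ℝ)| ≤ euclNormZ j := by
    rw [euclNormZ, ← Real.sqrt_sq_eq_abs]
    apply Real.sqrt_le_sqrt
    exact Finset.single_le_sum (f := fun i => ((j i:ℝ))^2) (fun i _ => sq_nonneg _)
      (Finset.mem_univ i)
  exact max_le_max le_rfl h

/-- ENNReal weight -/
noncomputable def WE (j : Fin n → ℤ) : ℝ≥0∞ := ENNReal.ofReal (wt1 j)

lemma one_le_WE (j : Fin n → ℤ) : 1 ≤ WE j := by
  rw [WE, ← ENNReal.ofReal_one]
  exact ENNReal.ofReal_le_ofReal (one_le_wt1 j)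

lemma WE_ne_top (j : Fin n → ℤ) : WE j ≠ ∞ := ENNReal.ofReal_ne_top
lemma WE_ne_zero (j : Fin n → ℤ) : WE j ≠ 0 :=
  fun h => by simpa [h] using one_le_WE j

lemma WE_rpow (j : Fin n → ℤ) (r : ℝ) : WE j ^ r = ENNReal.ofReal (wt1 j ^ r) :=
  ENNReal.ofReal_rpow_of_pos (wt1_pos j)


lemma summable_hr {q : ℝ} (hq : 1 < q) :
    Summable (fun m : ℤ => (max 1 |(m:ℝ)|) ^ (-q)) := by
  have hs := Real.summable_abs_int_rpow hq
  have hind : Summable (fun m : ℤ => if m = 0 then (1:ℝ) else 0) :=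
    summable_of_ne_finset_zero (s := {(0:ℤ)}) fun m hm => if_neg (by simpa using hm)
  apply Summable.of_nonneg_of_le
    (fun m => Real.rpow_nonneg (le_trans zero_le_one (le_max_left _ _)) _)
    _ (hs.add hind)
  intro m
  rcases eq_or_ne m 0 with rfl | hm
  · simp [Real.zero_rpow (by linarith : -q ≠ 0), Real.rpow_natCast]
  · have h1 : (1:ℝ) ≤ |(m:ℝ)| := by
      rw [← Int.cast_abs]
      exact_mod_cast Int.one_le_abs (by exact_mod_cast hm)
    rw [max_eq_right h1, if_neg hm]
    simp

lemma tsum_pi_prod (h : ℤ → ℝ≥0∞) (n : ℕ) :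
    ∑' k : Fin n → ℤ, ∏ i, h (k i) = (∑' m, h m) ^ n := by
  induction n with
  | zero =>
    rw [tsum_eq_single (fun _ => 0) (fun b hb => absurd (Subsingleton.elim b _) hb), pow_zero]
    exact Finset.prod_of_isEmpty _
  | succ n ih =>
    rw [← (Fin.consEquiv (fun _ : Fin (n+1) => ℤ)).tsum_eq, ENNReal.tsum_prod']
    have e : ∀ (m : ℤ) (k : Fin n → ℤ),
        (∏ i, h ((Fin.consEquiv (fun _ : Fin (n+1) => ℤ)) (m, k) i)) = h m * ∏ i, h (k i) := by
      intro m k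
      simp only [Fin.consEquiv_apply]
      rw [Fin.prod_univ_succ, Fin.cons_zero]
      congr 1
    calc (∑' (m : ℤ) (k : Fin n → ℤ), ∏ i, h ((Fin.consEquiv (fun _ : Fin (n+1) => ℤ)) (m, k) i))
        = ∑' (m : ℤ), h m * ∑' k : Fin n → ℤ, ∏ i, h (k i) := by
          exact tsum_congr fun m => (tsum_congr (e m)).trans ENNReal.tsum_mul_left
      _ = (∑' m, h m) ^ (n+1) := by
          rw [ENNReal.tsum_mul_right, ih, pow_succ]
          ring

lemma Z_ne_top (hn : 1 ≤ n) {σ : ℝ} (hσ : (n:ℝ) + 1 ≤ 2*σ) :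
    (∑' k : Fin n → ℤ, WE k ^ (-(2*σ))) ≠ ∞ := by
  have hn0 : (0:ℝ) < n := by exact_mod_cast hn
  set q : ℝ := 2*σ/n with hqdef
  have hq : 1 < q := by
    rw [hqdef, lt_div_iff₀ hn0]
    linarith
  have hq0 : 0 ≤ q := by linarith
  set h : ℤ → ℝ≥0∞ := fun m => ENNReal.ofReal ((max 1 |(m:ℝ)|) ^ (-q)) with hhdef
  have hpoint : ∀ k : Fin n → ℤ, WE k ^ (-(2*σ)) ≤ ∏ i, h (k i) := by
    intro k
    have hbase : ∀ i : Fin n, (0:ℝ) < max 1 |(k i:ℝ)| :=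
      fun i => lt_of_lt_of_le one_pos (le_max_left _ _)
    have h1 : ∀ i : Fin n, h (k i) = ((ENNReal.ofReal (max 1 |(k i:ℝ)|)) ^ q)⁻¹ := by
      intro i
      simp only [hhdef]
      rw [← ENNReal.ofReal_rpow_of_pos (hbase i), ENNReal.rpow_neg]
    have h2 : (∏ i, h (k i)) = (∏ i, (ENNReal.ofReal (max 1 |(k i:ℝ)|)) ^ q)⁻¹ := by
      rw [ENNReal.prod_inv_distrib
        (fun i _ j _ _ => Or.inl
          (ENNReal.rpow_pos (ENNReal.ofReal_pos.mpr (hbase i)) ENNReal.ofReal_ne_top).ne')]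
      exact Finset.prod_congr rfl fun i _ => h1 i
    rw [h2, ENNReal.rpow_neg]
    apply ENNReal.inv_le_inv.mpr
    calc ∏ i, (ENNReal.ofReal (max 1 |(k i:ℝ)|)) ^ q
        ≤ ∏ _i : Fin n, WE k ^ q := by
          refine Finset.prod_le_prod' fun i _ => ?_
          exact ENNReal.rpow_le_rpow (ENNReal.ofReal_le_ofReal (wt1_coord k i)) hq0
      _ = (WE k ^ q) ^ (n:ℕ) := by rw [Finset.prod_const, Finset.card_univ, Fintype.card_fin]
      _ = WE k ^ (2*σ) := by
          rw [← ENNReal.rpow_natCast (WE k ^ q), ← ENNReal.rpow_mul]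
          congr 1
          rw [hqdef]
          field_simp
  have hsum : (∑' m, h m) ≠ ∞ := by
    rw [hhdef, ← ENNReal.ofReal_tsum_of_nonneg
      (fun m => Real.rpow_nonneg (le_trans zero_le_one (le_max_left _ _)) _) (summable_hr hq)]
    exact ENNReal.ofReal_ne_top
  refine ne_top_of_le_ne_top ?_ (ENNReal.tsum_le_tsum hpoint)
  rw [tsum_pi_prod]
  exact ENNReal.pow_ne_top hsum

end SobAux


namespace SobAux
variable {n : ℕ}

noncomputable def FE (u : (Fin n → ℤ) → ℂ) : (Fin n → ℤ) → ℝ≥0∞ := fun j => (‖u j‖₊ : ℝ≥0∞)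

noncomputable def SE (s : ℝ) (u : (Fin n → ℤ) → ℂ) : ℝ≥0∞ :=
  ∑' j, WE j ^ (2*s) * FE u j ^ (2:ℝ)

lemma FE_sq (x : ℂ) : ((‖x‖₊ : ℝ≥0∞)) ^ (2:ℝ) = ENNReal.ofReal (‖x‖^2) := by
  rw [ENNReal.rpow_two, sq, sq, ENNReal.ofReal_mul (norm_nonneg x), ofReal_norm, enorm_eq_nnnorm]

lemma SE_term (s : ℝ) (u : (Fin n → ℤ) → ℂ) (j : Fin n → ℤ) :
    WE j ^ (2*s) * FE u j ^ (2:ℝ) = ENNReal.ofReal (wt1 j ^ (2*s) * ‖u j‖^2) := by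
  rw [WE_rpow, FE, FE_sq, ← ENNReal.ofReal_mul (Real.rpow_nonneg (wt1_pos j).le _)]

lemma term_nonneg (s : ℝ) (u : (Fin n → ℤ) → ℂ) (j : Fin n → ℤ) :
    0 ≤ wt1 j ^ (2*s) * ‖u j‖^2 :=
  mul_nonneg (Real.rpow_nonneg (wt1_pos j).le _) (sq_nonneg _)

lemma memSob_iff {s : ℝ} {u : (Fin n → ℤ) → ℂ} : MemSob s u ↔ SE s u ≠ ∞ := by
  have hSE : SE s u = ∑' j, ENNReal.ofReal (wt1 j ^ (2*s) * ‖u j‖^2) :=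
    tsum_congr (SE_term s u)
  constructor
  · intro h
    rw [hSE, ← ENNReal.ofReal_tsum_of_nonneg (term_nonneg s u) h]
    exact ENNReal.ofReal_ne_top
  · intro h
    rw [hSE] at h
    have h2 := ENNReal.summable_toReal h
    refine h2.congr fun j => ?_
    rw [ENNReal.toReal_ofReal (term_nonneg s u j)]

lemma sobSq_eq {s : ℝ} {u : (Fin n → ℤ) → ℂ} (h : MemSob s u) :
    sobSq s u = (SE s u).toReal := by
  have hSE : SE s u = ∑' j, ENNReal.ofReal (wt1 j ^ (2*s) * ‖u j‖^2) :=
    tsum_congr (SE_term s u)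
  rw [hSE, ← ENNReal.ofReal_tsum_of_nonneg (term_nonneg s u) h,
    ENNReal.toReal_ofReal (tsum_nonneg (term_nonneg s u))]
  rfl

lemma sobN_eq {s : ℝ} {u : (Fin n → ℤ) → ℂ} (h : MemSob s u) :
    sobN s u = ((SE s u) ^ (2⁻¹:ℝ)).toReal := by
  rw [sobN, sobSq_eq h, Real.sqrt_eq_rpow, ENNReal.toReal_rpow, one_div]

lemma sobN_eq' {s : ℝ} {u : (Fin n → ℤ) → ℂ} (h : MemSob s u) :
    sobN s u = (SE s u).toReal ^ (2⁻¹:ℝ) := by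
  rw [sobN_eq h, ENNReal.toReal_rpow]

lemma SE_mono {σ s : ℝ} (hσs : σ ≤ s) (u : (Fin n → ℤ) → ℂ) : SE σ u ≤ SE s u := by
  refine ENNReal.tsum_le_tsum fun j => ?_
  exact mul_le_mul_left
    (ENNReal.rpow_le_rpow_of_exponent_le (one_le_WE j) (by linarith)) _

lemma weight_split {σ s : ℝ} (hσ1 : 1 ≤ σ) (hσs : σ ≤ s) (j k : Fin n → ℤ) :
    WE j ^ s ≤ ENNReal.ofReal ((3*s)^s) * WE k ^ s + ENNReal.ofReal (2^σ) * WE (j-k) ^ s := by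
  have hs0 : (0:ℝ) ≤ 3*s := by linarith
  rw [WE_rpow, WE_rpow, WE_rpow,
    ← ENNReal.ofReal_mul (Real.rpow_nonneg hs0 _),
    ← ENNReal.ofReal_mul (Real.rpow_nonneg (by norm_num) _),
    ← ENNReal.ofReal_add (mul_nonneg (Real.rpow_nonneg hs0 _) (Real.rpow_nonneg (wt1_pos k).le _))
      (mul_nonneg (Real.rpow_nonneg (by norm_num) _) (Real.rpow_nonneg (wt1_pos _).le _))]
  exact ENNReal.ofReal_le_ofReal
    (scalar_split hσ1 hσs (wt1_pos j).le (wt1_pos k).le (wt1_pos _).le (wt1_triangle j k))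

lemma FE_conv_le (u v : (Fin n → ℤ) → ℂ) (j : Fin n → ℤ) :
    FE (convC u v) j ≤ conv2 (FE u) (FE v) j := by
  by_cases hs : Summable fun k : Fin n → ℤ => u k * v (j - k)
  · have hns : Summable fun k : Fin n → ℤ => ‖u k * v (j - k)‖ := summable_norm_iff.mpr hs
    calc FE (convC u v) j = ENNReal.ofReal ‖∑' k, u k * v (j-k)‖ :=
          ((ofReal_norm _).trans (enorm_eq_nnnorm _)).symm
      _ ≤ ENNReal.ofReal (∑' k, ‖u k * v (j-k)‖) :=
          ENNReal.ofReal_le_ofReal (norm_tsum_le_tsum_norm hns)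
      _ = ∑' k, ENNReal.ofReal ‖u k * v (j-k)‖ :=
          ENNReal.ofReal_tsum_of_nonneg (fun _ => norm_nonneg _) hns
      _ = conv2 (FE u) (FE v) j := by
          refine tsum_congr fun k => ?_
          rw [norm_mul, ENNReal.ofReal_mul (norm_nonneg _), ofReal_norm,
            ofReal_norm]
          rfl
  · have : convC u v j = 0 := tsum_eq_zero_of_not_summable hs
    rw [FE, this]
    simp

lemma point_bound {σ s : ℝ} (hσ1 : 1 ≤ σ) (hσs : σ ≤ s) (u v : (Fin n → ℤ) → ℂ)
    (j : Fin n → ℤ) :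
    WE j ^ s * FE (convC u v) j ≤
      ENNReal.ofReal ((3*s)^s) * conv2 (fun k => WE k ^ s * FE u k) (FE v) j
      + ENNReal.ofReal (2^σ) * conv2 (FE u) (fun k => WE k ^ s * FE v k) j := by
  calc WE j ^ s * FE (convC u v) j
      ≤ WE j ^ s * conv2 (FE u) (FE v) j := mul_le_mul_right (FE_conv_le u v j) _
    _ = ∑' k, WE j ^ s * (FE u k * FE v (j - k)) := ENNReal.tsum_mul_left.symm
    _ ≤ ∑' k, (ENNReal.ofReal ((3*s)^s) * ((WE k ^ s * FE u k) * FE v (j-k))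
          + ENNReal.ofReal (2^σ) * (FE u k * ((WE (j-k) ^ s * FE v (j-k))))) := by
        refine ENNReal.tsum_le_tsum fun k => ?_
        calc WE j ^ s * (FE u k * FE v (j - k))
            ≤ (ENNReal.ofReal ((3*s)^s) * WE k ^ s + ENNReal.ofReal (2^σ) * WE (j-k) ^ s) *
              (FE u k * FE v (j - k)) := mul_le_mul_left (weight_split hσ1 hσs j k) _
          _ = _ := by ring
    _ = _ := by
        rw [ENNReal.tsum_add]
        congr 1 <;> exact ENNReal.tsum_mul_left

lemma l1_le (σ : ℝ) (g : (Fin n → ℤ) → ℝ≥0∞) :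
    ∑' k, g k ≤ (∑' k : Fin n → ℤ, WE k ^ (-(2*σ))) ^ (2⁻¹:ℝ) *
      (∑' k, WE k ^ (2*σ) * g k ^ (2:ℝ)) ^ (2⁻¹:ℝ) := by
  have h := tsum_CS (fun k => WE (n := n) k ^ (-σ)) (fun k => WE k ^ σ * g k)
  have e1 : ∀ k : Fin n → ℤ, WE k ^ (-σ) * (WE k ^ σ * g k) = g k := by
    intro k
    rw [← mul_assoc, ← ENNReal.rpow_add _ _ (WE_ne_zero k) (WE_ne_top k)]
    simp
  have e2 : ∀ k : Fin n → ℤ, (WE k ^ (-σ)) ^ (2:ℝ) = WE k ^ (-(2*σ)) := by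
    intro k
    rw [← ENNReal.rpow_mul]
    ring_nf
  have e3 : ∀ k : Fin n → ℤ, (WE k ^ σ * g k) ^ (2:ℝ) = WE k ^ (2*σ) * g k ^ (2:ℝ) := by
    intro k
    rw [ENNReal.mul_rpow_of_nonneg _ _ (by norm_num : (0:ℝ) ≤ 2), ← ENNReal.rpow_mul]
    ring_nf
  simp only [e1, e2, e3] at h
  exact h

lemma conv2_comm (f g : (Fin n → ℤ) → ℝ≥0∞) : conv2 f g = conv2 g f := by
  funext j
  rw [conv2, conv2, ← (Equiv.subLeft j).tsum_eq (fun k => g k * f (j - k))]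
  refine tsum_congr fun k => ?_
  simp only [Equiv.subLeft_apply, sub_sub_cancel]
  ring

lemma PQ_sq (s : ℝ) (u : (Fin n → ℤ) → ℂ) :
    (∑' j, (WE j ^ s * FE u j) ^ (2:ℝ)) = SE s u := by
  refine tsum_congr fun j => ?_
  rw [ENNReal.mul_rpow_of_nonneg _ _ (by norm_num : (0:ℝ) ≤ 2), ← ENNReal.rpow_mul]
  ring_nf

lemma main_bound {σ s : ℝ} (hσ1 : 1 ≤ σ) (hσs : σ ≤ s) (u v : (Fin n → ℤ) → ℂ) :
    SE s (convC u v) ^ (2⁻¹:ℝ) ≤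
      ENNReal.ofReal ((3*s)^s) * ((∑' k : Fin n → ℤ, WE k ^ (-(2*σ))) ^ (2⁻¹:ℝ)) *
        (SE s u ^ (2⁻¹:ℝ) * SE σ v ^ (2⁻¹:ℝ)) +
      ENNReal.ofReal (2^σ) * ((∑' k : Fin n → ℤ, WE k ^ (-(2*σ))) ^ (2⁻¹:ℝ)) *
        (SE σ u ^ (2⁻¹:ℝ) * SE s v ^ (2⁻¹:ℝ)) := by
  set K1 := ENNReal.ofReal ((3*s)^s) with hK1
  set K2 := ENNReal.ofReal (2^σ) with hK2
  set Z := ∑' k : Fin n → ℤ, WE k ^ (-(2*σ)) with hZ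
  set F := FE u with hF
  set G := FE v with hG
  set P := fun k : Fin n → ℤ => WE k ^ s * F k with hP
  set Q := fun k : Fin n → ℤ => WE k ^ s * G k with hQ
  have hSE : SE s (convC u v) = ∑' j, (WE j ^ s * FE (convC u v) j) ^ (2:ℝ) :=
    (PQ_sq s (convC u v)).symm
  have h1 : SE s (convC u v) ^ (2⁻¹:ℝ) ≤
      K1 * (∑' j, conv2 P G j ^ (2:ℝ)) ^ (2⁻¹:ℝ) +
      K2 * (∑' j, conv2 F Q j ^ (2:ℝ)) ^ (2⁻¹:ℝ) := by
    rw [hSE]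
    calc (∑' j, (WE j ^ s * FE (convC u v) j) ^ (2:ℝ)) ^ (2⁻¹:ℝ)
        ≤ (∑' j, (K1 * conv2 P G j + K2 * conv2 F Q j) ^ (2:ℝ)) ^ (2⁻¹:ℝ) := by
          refine ENNReal.rpow_le_rpow (ENNReal.tsum_le_tsum fun j => ?_) (by norm_num)
          exact ENNReal.rpow_le_rpow (point_bound hσ1 hσs u v j) (by norm_num)
      _ ≤ (∑' j, (K1 * conv2 P G j) ^ (2:ℝ)) ^ (2⁻¹:ℝ) +
          (∑' j, (K2 * conv2 F Q j) ^ (2:ℝ)) ^ (2⁻¹:ℝ) :=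
          tsum_Minkowski (fun j => K1 * conv2 P G j) (fun j => K2 * conv2 F Q j)
      _ = _ := by rw [tsum_sq_smul, tsum_sq_smul]
  have h2 : (∑' j, conv2 P G j ^ (2:ℝ)) ^ (2⁻¹:ℝ) ≤
      SE s u ^ (2⁻¹:ℝ) * (Z ^ (2⁻¹:ℝ) * SE σ v ^ (2⁻¹:ℝ)) := by
    calc (∑' j, conv2 P G j ^ (2:ℝ)) ^ (2⁻¹:ℝ)
        ≤ (∑' j, P j ^ (2:ℝ)) ^ (2⁻¹:ℝ) * ∑' j, G j := young_l2_l1 P G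
      _ ≤ (∑' j, P j ^ (2:ℝ)) ^ (2⁻¹:ℝ) *
            (Z ^ (2⁻¹:ℝ) * (∑' k, WE k ^ (2*σ) * G k ^ (2:ℝ)) ^ (2⁻¹:ℝ)) :=
          mul_le_mul_right (l1_le σ G) _
      _ = _ := by rw [hP, PQ_sq s u, hG, show (∑' k, WE k ^ (2*σ) * FE v k ^ (2:ℝ)) = SE σ v from rfl]
  have h3 : (∑' j, conv2 F Q j ^ (2:ℝ)) ^ (2⁻¹:ℝ) ≤
      SE s v ^ (2⁻¹:ℝ) * (Z ^ (2⁻¹:ℝ) * SE σ u ^ (2⁻¹:ℝ)) := by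
    calc (∑' j, conv2 F Q j ^ (2:ℝ)) ^ (2⁻¹:ℝ)
        = (∑' j, conv2 Q F j ^ (2:ℝ)) ^ (2⁻¹:ℝ) := by rw [conv2_comm]
      _ ≤ (∑' j, Q j ^ (2:ℝ)) ^ (2⁻¹:ℝ) * ∑' j, F j := young_l2_l1 Q F
      _ ≤ (∑' j, Q j ^ (2:ℝ)) ^ (2⁻¹:ℝ) *
            (Z ^ (2⁻¹:ℝ) * (∑' k, WE k ^ (2*σ) * F k ^ (2:ℝ)) ^ (2⁻¹:ℝ)) :=
          mul_le_mul_right (l1_le σ F) _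
      _ = _ := by rw [hQ, PQ_sq s v, hF, show (∑' k, WE k ^ (2*σ) * FE u k ^ (2:ℝ)) = SE σ u from rfl]
  calc SE s (convC u v) ^ (2⁻¹:ℝ)
      ≤ K1 * (SE s u ^ (2⁻¹:ℝ) * (Z ^ (2⁻¹:ℝ) * SE σ v ^ (2⁻¹:ℝ))) +
        K2 * (SE s v ^ (2⁻¹:ℝ) * (Z ^ (2⁻¹:ℝ) * SE σ u ^ (2⁻¹:ℝ))) := by
        refine h1.trans (add_le_add (mul_le_mul_right h2 _) (mul_le_mul_right h3 _))
    _ = _ := by ring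

end SobAux

/-- **Interpolation.** For `s ≥ s_n := [n/2] + 1` there is an increasing
(positive) `C(s)` with `‖uv‖_s ≤ C(s)‖u‖_s‖v‖_{s_n} + C(s_n)‖u‖_{s_n}‖v‖_s` for all
`u, v ∈ H^s(𝕋^n)`; in particular `H^s(𝕋^n)` is an algebra for `s ≥ s_n`. -/
theorem stmt3 (n : ℕ) (hn : 1 ≤ n) :
    ∃ C : ℝ → ℝ, Monotone C ∧ (∀ s, 0 < C s) ∧
      ∀ s : ℝ, ((n / 2 + 1 : ℕ) : ℝ) ≤ s →
        ∀ u v : (Fin n → ℤ) → ℂ, MemSob s u → MemSob s v →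
          MemSob s (convC u v) ∧
          sobN s (convC u v) ≤
            C s * sobN s u * sobN ((n / 2 + 1 : ℕ) : ℝ) v +
              C ((n / 2 + 1 : ℕ) : ℝ) * sobN ((n / 2 + 1 : ℕ) : ℝ) u * sobN s v := by
  classical
  open SobAux in
  set σn : ℝ := ((n / 2 + 1 : ℕ) : ℝ) with hσn
  have hσ1 : (1:ℝ) ≤ σn := by
    rw [hσn]
    exact_mod_cast Nat.succ_le_succ (Nat.zero_le _)
  set Z : ℝ≥0∞ := ∑' k : Fin n → ℤ, WE k ^ (-(2*σn)) with hZdef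
  have hZ : Z ≠ ∞ := by
    refine Z_ne_top hn ?_
    have hnat : n + 1 ≤ 2*(n/2+1) := by omega
    rw [hσn]
    exact_mod_cast hnat
  set Z2 : ℝ := (Z ^ (2⁻¹:ℝ)).toReal with hZ2def
  have hZ2 : 0 ≤ Z2 := ENNReal.toReal_nonneg
  set cB : ℝ := max Z2 1 with hcB
  have hcB1 : 1 ≤ cB := le_max_right _ _
  have hcB0 : 0 < cB := lt_of_lt_of_le one_pos hcB1
  refine ⟨fun s => cB * ((3 * max s 1) ^ (max s 1) + 2 ^ (max s 1)), ?_, ?_, ?_⟩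
  · -- Monotone
    intro a b hab
    have ha1 : (1:ℝ) ≤ max a 1 := le_max_right _ _
    have hb1 : (1:ℝ) ≤ max b 1 := le_max_right _ _
    have hab' : max a 1 ≤ max b 1 := max_le_max hab le_rfl
    have h1 : (3 * max a 1) ^ (max a 1) ≤ (3 * max b 1) ^ (max b 1) := by
      calc (3 * max a 1) ^ (max a 1) ≤ (3 * max b 1) ^ (max a 1) :=
            Real.rpow_le_rpow (by linarith) (by linarith) (by linarith)
        _ ≤ (3 * max b 1) ^ (max b 1) :=
            Real.rpow_le_rpow_of_exponent_le (by linarith) hab'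
    have h2 : (2:ℝ) ^ (max a 1) ≤ 2 ^ (max b 1) :=
      Real.rpow_le_rpow_of_exponent_le one_le_two hab'
    have := add_le_add h1 h2
    exact mul_le_mul_of_nonneg_left this hcB0.le
  · -- positivity
    intro s
    have h1 : (0:ℝ) < (3 * max s 1) ^ (max s 1) :=
      Real.rpow_pos_of_pos (by nlinarith [le_max_right s (1:ℝ)]) _
    have h2 : (0:ℝ) < (2:ℝ) ^ (max s 1) := Real.rpow_pos_of_pos two_pos _
    positivity
  · -- main estimate
    intro s hs u v hu hv
    have hσs : σn ≤ s := hs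
    have hs1 : (1:ℝ) ≤ s := hσ1.trans hσs
    have hEu : SE s u ≠ ∞ := memSob_iff.mp hu
    have hEv : SE s v ≠ ∞ := memSob_iff.mp hv
    have hEuσ : SE σn u ≠ ∞ := ne_top_of_le_ne_top hEu (SE_mono hσs u)
    have hEvσ : SE σn v ≠ ∞ := ne_top_of_le_ne_top hEv (SE_mono hσs v)
    have huσ : MemSob σn u := memSob_iff.mpr hEuσ
    have hvσ : MemSob σn v := memSob_iff.mpr hEvσ
    have hmb := main_bound (u := u) (v := v) hσ1 hσs
    rw [← hZdef] at hmb
    -- finiteness of the right-hand side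
    have hfin : ∀ (K : ℝ) (A B : ℝ≥0∞), A ≠ ∞ → B ≠ ∞ →
        ENNReal.ofReal K * (Z ^ (2⁻¹:ℝ)) * (A ^ (2⁻¹:ℝ) * B ^ (2⁻¹:ℝ)) ≠ ∞ := by
      intro K A B hA hB
      apply ENNReal.mul_ne_top (ENNReal.mul_ne_top ENNReal.ofReal_ne_top
        (ENNReal.rpow_ne_top_of_nonneg (by norm_num) hZ))
      exact ENNReal.mul_ne_top (ENNReal.rpow_ne_top_of_nonneg (by norm_num) hA)
        (ENNReal.rpow_ne_top_of_nonneg (by norm_num) hB)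
    have hRHS : ENNReal.ofReal ((3*s)^s) * (Z ^ (2⁻¹:ℝ)) *
          (SE s u ^ (2⁻¹:ℝ) * SE σn v ^ (2⁻¹:ℝ)) +
        ENNReal.ofReal (2^σn) * (Z ^ (2⁻¹:ℝ)) *
          (SE σn u ^ (2⁻¹:ℝ) * SE s v ^ (2⁻¹:ℝ)) ≠ ∞ :=
      ENNReal.add_ne_top.mpr ⟨hfin _ _ _ hEu hEvσ, hfin _ _ _ hEuσ hEv⟩
    have hconv : SE s (convC u v) ≠ ∞ := by
      intro htop
      have h1 : SE s (convC u v) ^ (2⁻¹:ℝ) = ∞ := by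
        rw [htop]
        simp [ENNReal.top_rpow_of_pos (by norm_num : (0:ℝ) < 2⁻¹)]
      exact hRHS (top_le_iff.mp (h1 ▸ hmb))
    have hmemconv : MemSob s (convC u v) := memSob_iff.mpr hconv
    refine ⟨hmemconv, ?_⟩
    -- pass to real numbers
    have hreal := ENNReal.toReal_mono hRHS hmb
    rw [ENNReal.toReal_add (hfin _ _ _ hEu hEvσ) (hfin _ _ _ hEuσ hEv)] at hreal
    simp only [ENNReal.toReal_mul, ENNReal.toReal_ofReal
        (Real.rpow_nonneg (by linarith : (0:ℝ) ≤ 3*s) s),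
      ENNReal.toReal_ofReal (Real.rpow_nonneg (by norm_num : (0:ℝ) ≤ 2) σn),
      ← ENNReal.toReal_rpow] at hreal
    have hZ2' : Z.toReal ^ (2⁻¹:ℝ) = Z2 := by rw [hZ2def, ← ENNReal.toReal_rpow]
    rw [hZ2', ← sobN_eq' hmemconv, ← sobN_eq' hu, ← sobN_eq' hv, ← sobN_eq' huσ,
      ← sobN_eq' hvσ] at hreal
    have hNu : 0 ≤ sobN s u := Real.sqrt_nonneg _
    have hNv : 0 ≤ sobN s v := Real.sqrt_nonneg _
    have hNuσ : 0 ≤ sobN σn u := Real.sqrt_nonneg _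
    have hNvσ : 0 ≤ sobN σn v := Real.sqrt_nonneg _
    have hmax_s : max s 1 = s := max_eq_left hs1
    have hmax_σ : max σn 1 = σn := max_eq_left hσ1
    have hc1 : (3*s)^s * Z2 ≤ cB * ((3 * max s 1) ^ (max s 1) + 2 ^ (max s 1)) := by
      rw [hmax_s]
      have h2s : (0:ℝ) ≤ (2:ℝ) ^ s := (Real.rpow_pos_of_pos two_pos s).le
      have h3s : (0:ℝ) ≤ (3*s) ^ s := Real.rpow_nonneg (by linarith) s
      have hZcB : Z2 ≤ cB := le_max_left _ _
      nlinarith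
    have hc2 : (2:ℝ)^σn * Z2 ≤ cB * ((3 * max σn 1) ^ (max σn 1) + 2 ^ (max σn 1)) := by
      rw [hmax_σ]
      have h2s : (0:ℝ) ≤ (2:ℝ) ^ σn := (Real.rpow_pos_of_pos two_pos σn).le
      have h3s : (0:ℝ) ≤ (3*σn) ^ σn := Real.rpow_nonneg (by linarith) σn
      have hZcB : Z2 ≤ cB := le_max_left _ _
      nlinarith
    calc sobN s (convC u v)
        ≤ (3*s)^s * Z2 * (sobN s u * sobN σn v) + (2:ℝ)^σn * Z2 * (sobN σn u * sobN s v) := by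
          convert hreal using 2 <;> ring
      _ ≤ cB * ((3 * max s 1) ^ (max s 1) + 2 ^ (max s 1)) * (sobN s u * sobN σn v) +
          cB * ((3 * max σn 1) ^ (max σn 1) + 2 ^ (max σn 1)) * (sobN σn u * sobN s v) := by
          refine add_le_add (mul_le_mul_of_nonneg_right hc1 (by positivity))
            (mul_le_mul_of_nonneg_right hc2 (by positivity))
      _ = _ := by ring
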